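/- Let C₁, …, C_N be nonempty closed convex subsets of a real Hilbert space X with metric projections P₁, …, P_N, and let T := P_N ∘ P_{N−1} ∘ ⋯ ∘ P₁. Then T is asymptotically regular: for every x ∈ X, ‖T^k(x) − T^{k+1}(x)‖ → 0 as k → ∞. -/

import Mathlib

open Filter RealInnerProductSpace

/-- `P` is the metric (nearest-point) projection onto the set `C`. -/
def IsProjOn {H : Type*} [NormedAddCommGroup H] (P : H → H) (C : Set H) : Prop :=
  ∀ x : H, P x ∈ C ∧ ∀ y ∈ C, ‖x - P x‖ ≤ ‖x - y‖

/-- The composition `P_N ∘ P_{N-1} ∘ ⋯ ∘ P₁` (with `0`-based indices: `P 0` is applied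
first and `P (N-1)` last). -/
def foldProj {H : Type*} {N : ℕ} (P : Fin N → H → H) : H → H :=
  fun x => (List.ofFn P).foldl (fun y f => f y) x

section Aux
variable {H : Type*} [NormedAddCommGroup H] [InnerProductSpace ℝ H]

/-- variational inequality for a metric projection onto a convex set -/
lemma proj_var_ineq {C : Set H} (hcv : Convex ℝ C) {P : H → H} (hP : IsProjOn P C)
    (x : H) {c : H} (hc : c ∈ C) : ⟪x - P x, c - P x⟫ ≤ 0 := by
  by_contra hI
  push_neg at hI
  set I : ℝ := ⟪x - P x, c - P x⟫ with hIdef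
  have hcP : c - P x ≠ 0 := by
    intro h
    rw [hIdef, h, inner_zero_right] at hI
    exact lt_irrefl 0 hI
  have hq : (0:ℝ) < ‖c - P x‖^2 := pow_pos (norm_pos_iff.mpr hcP) 2
  set t : ℝ := min 1 (I / ‖c - P x‖^2) with ht
  have ht0 : 0 < t := lt_min one_pos (div_pos hI hq)
  have ht1 : t ≤ 1 := min_le_left _ _
  have hmem : P x + t • (c - P x) ∈ C := by
    have h := hcv (hP x).1 hc (by linarith : (0:ℝ) ≤ 1 - t) ht0.le (by ring)
    have heq : (1 - t) • P x + t • c = P x + t • (c - P x) := by module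
    rwa [heq] at h
  have hle := (hP x).2 _ hmem
  have hexp : ‖x - (P x + t • (c - P x))‖^2
      = ‖x - P x‖^2 - 2*(t*I) + t^2*‖c - P x‖^2 := by
    have h1 : x - (P x + t • (c - P x)) = (x - P x) - t • (c - P x) := by abel
    rw [h1, norm_sub_sq_real, real_inner_smul_right, norm_smul, Real.norm_eq_abs,
      mul_pow, sq_abs]
  have hsq : ‖x - P x‖^2 ≤ ‖x - (P x + t • (c - P x))‖^2 := by
    have := hle
    nlinarith [norm_nonneg (x - P x), norm_nonneg (x - (P x + t • (c - P x)))]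
  have htq : t * ‖c - P x‖^2 ≤ I := by
    have : t ≤ I / ‖c - P x‖^2 := min_le_right _ _
    calc t * ‖c - P x‖^2 ≤ (I / ‖c - P x‖^2) * ‖c - P x‖^2 := by
          exact mul_le_mul_of_nonneg_right this hq.le
      _ = I := by field_simp
  nlinarith [mul_pos ht0 hI]

/-- firm nonexpansiveness -/
lemma proj_firm {C : Set H} (hcv : Convex ℝ C) {P : H → H} (hP : IsProjOn P C)
    (x y : H) : ‖P x - P y‖^2 + ‖(x - P x) - (y - P y)‖^2 ≤ ‖x - y‖^2 := by
  have h1 := proj_var_ineq hcv hP x (hP y).1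
  have h2 := proj_var_ineq hcv hP y (hP x).1
  have hdecomp : x - y = (P x - P y) + ((x - P x) - (y - P y)) := by abel
  have hx : ‖x - y‖^2 = ‖P x - P y‖^2 + 2*⟪P x - P y, (x - P x) - (y - P y)⟫
      + ‖(x - P x) - (y - P y)‖^2 := by
    rw [hdecomp, norm_add_sq_real]
  have hcross : 0 ≤ ⟪P x - P y, (x - P x) - (y - P y)⟫ := by
    simp only [inner_sub_left, inner_sub_right] at h1 h2 ⊢
    linarith [real_inner_comm x (P x), real_inner_comm x (P y), real_inner_comm y (P x),
      real_inner_comm y (P y), real_inner_comm (P x) (P y)]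
  linarith

/-- norm-square growth bound -/
lemma proj_norm_sq {C : Set H} (hcv : Convex ℝ C) {P : H → H} (hP : IsProjOn P C)
    {c : H} (hc : c ∈ C) (z : H) : ‖P z‖^2 ≤ ‖z‖^2 + ‖c‖^2 := by
  have h := proj_var_ineq hcv hP z hc
  have hz : ‖z‖^2 = ‖P z‖^2 + 2*⟪P z, z - P z⟫ + ‖z - P z‖^2 := by
    have : z = P z + (z - P z) := by abel
    nth_rewrite 1 [this]
    rw [norm_add_sq_real]
  have hic : ⟪z - P z, c⟫ ≤ ⟪z - P z, P z⟫ := by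
    have := h
    rw [inner_sub_right] at this
    linarith
  have hlow : -(‖c‖ * ‖z - P z‖) ≤ ⟪z - P z, c⟫ := by
    have := real_inner_le_norm (z - P z) (-c)
    rw [inner_neg_right] at this
    simp only [norm_neg] at this
    nlinarith [this]
  have hcomm : ⟪z - P z, P z⟫ = ⟪P z, z - P z⟫ := real_inner_comm _ _
  nlinarith [sq_nonneg (‖z - P z‖ - ‖c‖)]

end Aux


section ListAux
set_option linter.unusedSectionVars false
variable {H : Type*} [NormedAddCommGroup H] [InnerProductSpace ℝ H]

def listComp (l : List (H → H)) (x : H) : H := l.foldl (fun y f => f y) x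

@[simp] lemma listComp_nil (x : H) : listComp ([] : List (H → H)) x = x := rfl

@[simp] lemma listComp_append_singleton (l : List (H → H)) (f : H → H) (x : H) :
    listComp (l ++ [f]) x = f (listComp l x) := by
  simp [listComp]

@[simp] lemma listComp_cons (f : H → H) (l : List (H → H)) (x : H) :
    listComp (f :: l) x = listComp l (f x) := rfl

lemma listComp_nonexp (l : List (H → H))
    (hl : ∀ f ∈ l, ∀ a b : H, ‖f a - f b‖ ≤ ‖a - b‖) (x y : H) :
    ‖listComp l x - listComp l y‖ ≤ ‖x - y‖ := by
  induction l generalizing x y with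
  | nil => simp
  | cons f l ih =>
    simp only [listComp_cons]
    exact le_trans (ih (fun g hg => hl g (List.mem_cons_of_mem f hg)) (f x) (f y))
      (hl f List.mem_cons_self x y)

lemma listComp_norm_sq (l : List (H → H)) (K : ℝ)
    (hl : ∀ f ∈ l, ∀ z : H, ‖f z‖^2 ≤ ‖z‖^2 + K) (x : H) :
    ‖listComp l x‖^2 ≤ ‖x‖^2 + l.length * K := by
  induction l generalizing x with
  | nil => simp
  | cons f l ih =>
    simp only [listComp_cons, List.length_cons]
    have h1 := ih (fun g hg => hl g (List.mem_cons_of_mem f hg)) (f x)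
    have h2 := hl f List.mem_cons_self x
    push_cast
    nlinarith

/-- the multiplied averaged inequality for a composition of firmly nonexpansive maps -/
lemma listComp_firm (l : List (H → H))
    (hl : ∀ f ∈ l, ∀ a b : H, ‖f a - f b‖^2 + ‖(a - f a) - (b - f b)‖^2 ≤ ‖a - b‖^2)
    (x y : H) :
    (l.length : ℝ) * ‖listComp l x - listComp l y‖^2
      + ‖(x - listComp l x) - (y - listComp l y)‖^2 ≤ (l.length : ℝ) * ‖x - y‖^2 := by
  induction l using List.reverseRecOn generalizing x y with
  | nil => simp
  | append_singleton l f ih =>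
    rcases eq_or_ne l [] with rfl | hne
    · simpa using hl f (by simp) x y
    · have hlen : (1:ℝ) ≤ l.length := by
        have : 1 ≤ l.length := List.length_pos_iff.mpr hne
        exact_mod_cast this
      set n : ℝ := (l.length : ℝ) with hn
      have hfirm := hl f (by simp) (listComp l x) (listComp l y)
      have ihl := ih (fun g hg => hl g (by simp [hg])) x y
      set Fx := listComp l x with hFx
      set Fy := listComp l y with hFy
      set D := (x - Fx) - (y - Fy) with hD
      set E := (Fx - f Fx) - (Fy - f Fy) with hE
      have hDE : (x - f Fx) - (y - f Fy) = D + E := by rw [hD, hE]; abel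
      have hlen2 : ((l ++ [f]).length : ℝ) = n + 1 := by
        simp [hn]
      simp only [listComp_append_singleton, ← hFx, ← hFy, hDE, hlen2]
      have hadd : ‖D + E‖^2 = ‖D‖^2 + 2*⟪D, E⟫ + ‖E‖^2 := norm_add_sq_real D E
      have hsub : (0:ℝ) ≤ ‖D - n • E‖^2 := sq_nonneg _
      have hsub2 : ‖D - n • E‖^2 = ‖D‖^2 - 2*(n*⟪D, E⟫) + n^2*‖E‖^2 := by
        rw [norm_sub_sq_real, real_inner_smul_right, norm_smul, Real.norm_eq_abs,
          mul_pow, sq_abs]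
      rw [hsub2] at hsub
      nlinarith [sq_nonneg ‖E‖, sq_nonneg ‖D‖, norm_nonneg E, norm_nonneg D]
end ListAux

section ZD
set_option linter.unusedSectionVars false
variable {H : Type*} [NormedAddCommGroup H] [InnerProductSpace ℝ H]

lemma zero_disp [CompleteSpace H] (l : List (H → H)) (K : ℝ) (hK0 : 0 ≤ K)
    (hnon : ∀ f ∈ l, ∀ a b : H, ‖f a - f b‖ ≤ ‖a - b‖)
    (hbound : ∀ f ∈ l, ∀ z : H, ‖f z‖^2 ≤ ‖z‖^2 + K)
    {ε : ℝ} (hε : 0 < ε) : ∃ y : H, ‖y - listComp l y‖ < ε := by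
  set B : ℝ := (l.length : ℝ) * K with hB
  have hB0 : 0 ≤ B := by positivity
  set μ : ℝ := min (1/2) (ε^2/(2*(B+1))) with hμ
  have hμ0 : 0 < μ := lt_min (by norm_num) (by positivity)
  have hμ2 : μ ≤ 1/2 := min_le_left _ _
  have hμε : μ ≤ ε^2/(2*(B+1)) := min_le_right _ _
  set G : H → H := fun z => (1-μ) • listComp l z with hG
  have h1μ : (0:ℝ) ≤ 1 - μ := by linarith
  have hlip : LipschitzWith ⟨1-μ, h1μ⟩ G := by
    apply LipschitzWith.of_dist_le_mul
    intro a b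
    simp only [hG, dist_eq_norm, ← smul_sub, norm_smul, Real.norm_eq_abs,
      abs_of_nonneg h1μ]
    exact mul_le_mul_of_nonneg_left (listComp_nonexp l hnon a b) h1μ
  have hcw : ContractingWith ⟨1-μ, h1μ⟩ G := by
    constructor
    · exact NNReal.coe_lt_coe.mp (show (1 - μ : ℝ) < 1 by linarith)
    · exact hlip
  haveI : Nonempty H := ⟨0⟩
  set x := ContractingWith.fixedPoint G hcw with hxdef
  have hx : G x = x := hcw.fixedPoint_isFixedPt
  set T : H → H := listComp l with hTdef
  refine ⟨x, ?_⟩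
  set w : H := T x with hwdef
  have hb : ‖w‖^2 ≤ ‖x‖^2 + B := by
    have := listComp_norm_sq l K hbound x
    rw [hB]; exact this
  have hxval : x = (1-μ) • w := by
    rw [← hx]
  have hxnorm : ‖x‖^2 = (1-μ)^2*‖w‖^2 := by
    rw [hxval, norm_smul, Real.norm_eq_abs, abs_of_nonneg h1μ, mul_pow]
  have hdiff : ‖x - w‖ = μ * ‖w‖ := by
    rw [hxval]
    have h2 : (1-μ) • w - w = (-μ) • w := by module
    rw [h2, norm_smul, Real.norm_eq_abs, abs_neg, abs_of_nonneg hμ0.le]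
  have h1 : μ * ‖w‖^2 ≤ B := by
    nlinarith [sq_nonneg ‖w‖, mul_nonneg (mul_nonneg hμ0.le h1μ) (sq_nonneg ‖w‖)]
  have h2 : ‖x - w‖^2 < ε^2 := by
    rw [hdiff]
    have e1 : (μ*‖w‖)^2 = μ*(μ*‖w‖^2) := by ring
    have e2 : μ*(μ*‖w‖^2) ≤ μ*B := mul_le_mul_of_nonneg_left h1 hμ0.le
    have e3 : μ*B ≤ (ε^2/(2*(B+1)))*B :=
      mul_le_mul_of_nonneg_right hμε hB0
    have e4 : (ε^2/(2*(B+1)))*B < ε^2 := by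
      rw [div_mul_eq_mul_div, div_lt_iff₀ (by linarith)]
      nlinarith
    linarith
  nlinarith [norm_nonneg (x - w)]
end ZD


/-- Bauschke's "zero displacement" theorem: the composition of finitely many metric
projections onto nonempty closed convex sets in a Hilbert space is asymptotically
regular. -/
theorem stmt8 {H : Type*} [NormedAddCommGroup H] [InnerProductSpace ℝ H] [CompleteSpace H]
    {N : ℕ} (C : Fin N → Set H)
    (hne : ∀ i, (C i).Nonempty) (hcl : ∀ i, IsClosed (C i)) (hcv : ∀ i, Convex ℝ (C i))
    (P : Fin N → H → H) (hP : ∀ i, IsProjOn (P i) (C i)) :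
    ∀ x : H,
      Tendsto (fun k : ℕ => ‖(foldProj P)^[k] x - (foldProj P)^[k + 1] x‖) atTop (nhds 0) := by
  intro x
  have hTl : ∀ z : H, foldProj P z = listComp (List.ofFn P) z := fun z => rfl
  set l : List (H → H) := List.ofFn P with hl
  set T : H → H := foldProj P with hT
  have hmem : ∀ f ∈ l, ∃ i, P i = f := by
    intro f hf
    rw [hl, List.mem_ofFn] at hf
    exact hf
  have hfirm : ∀ f ∈ l, ∀ a b : H,
      ‖f a - f b‖^2 + ‖(a - f a) - (b - f b)‖^2 ≤ ‖a - b‖^2 := by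
    intro f hf a b
    obtain ⟨i, rfl⟩ := hmem f hf
    exact proj_firm (hcv i) (hP i) a b
  have hnon1 : ∀ f ∈ l, ∀ a b : H, ‖f a - f b‖ ≤ ‖a - b‖ := by
    intro f hf a b
    have h := hfirm f hf a b
    nlinarith [norm_nonneg (f a - f b), norm_nonneg (a - b),
      sq_nonneg ‖(a - f a) - (b - f b)‖]
  have hTnon : ∀ a b : H, ‖T a - T b‖ ≤ ‖a - b‖ := by
    intro a b
    exact listComp_nonexp l hnon1 a b
  choose c hc using hne
  set K : ℝ := ∑ i, ‖c i‖^2 with hK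
  have hK0 : 0 ≤ K := Finset.sum_nonneg (fun i _ => sq_nonneg _)
  have hKi : ∀ i, ‖c i‖^2 ≤ K :=
    fun i => Finset.single_le_sum (fun j _ => sq_nonneg ‖c j‖) (Finset.mem_univ i)
  have hbound : ∀ f ∈ l, ∀ z : H, ‖f z‖^2 ≤ ‖z‖^2 + K := by
    intro f hf z
    obtain ⟨i, rfl⟩ := hmem f hf
    exact le_trans (proj_norm_sq (hcv i) (hP i) (hc i) z) (by linarith [hKi i])
  rw [NormedAddCommGroup.tendsto_nhds_zero]
  intro ε hε
  obtain ⟨y, hy⟩ := zero_disp l K hK0 hnon1 hbound (show (0:ℝ) < ε/2 by linarith)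
  have hyT : ‖y - T y‖ < ε/2 := hy
  have hiter : ∀ (z : H) (k : ℕ), T^[k+1] z = T (T^[k] z) :=
    fun z k => Function.iterate_succ_apply' T k z
  set a : ℕ → ℝ := fun k => ‖T^[k] x - T^[k] y‖ with ha
  have hamono : ∀ k, a (k+1) ≤ a k := by
    intro k
    show ‖T^[k+1] x - T^[k+1] y‖ ≤ ‖T^[k] x - T^[k] y‖
    rw [hiter, hiter]
    exact hTnon _ _
  have haanti : Antitone a := antitone_nat_of_succ_le hamono
  have habdd : BddBelow (Set.range a) := ⟨0, by rintro _ ⟨k, rfl⟩; exact norm_nonneg _⟩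
  obtain ⟨A, hA⟩ : ∃ A, Tendsto a atTop (nhds A) :=
    ⟨_, tendsto_atTop_ciInf haanti habdd⟩
  have hsq : Tendsto
      (fun k => (l.length : ℝ) * (a k)^2 - (l.length : ℝ) * (a (k+1))^2)
      atTop (nhds 0) := by
    have h1 : Tendsto (fun k => (l.length:ℝ) * (a k)^2) atTop
        (nhds ((l.length:ℝ)*A^2)) := (hA.pow 2).const_mul _
    have h2 : Tendsto (fun k => (l.length:ℝ) * (a (k+1))^2) atTop
        (nhds ((l.length:ℝ)*A^2)) :=
      ((hA.comp (tendsto_add_atTop_nat 1)).pow 2).const_mul _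
    simpa using h1.sub h2
  have hev : ∀ᶠ k in atTop,
      (l.length:ℝ)*(a k)^2 - (l.length:ℝ)*(a (k+1))^2 < (ε/2)^2 :=
    hsq.eventually (gt_mem_nhds (by positivity))
  filter_upwards [hev] with k hk
  rw [Real.norm_eq_abs, abs_of_nonneg (norm_nonneg _)]
  have hcomp := listComp_firm l hfirm (T^[k] x) (T^[k] y)
  have e1 : listComp l (T^[k] x) = T^[k+1] x := ((hiter x k).trans rfl).symm
  have e2 : listComp l (T^[k] y) = T^[k+1] y := ((hiter y k).trans rfl).symm
  rw [e1, e2] at hcomp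
  set D := (T^[k] x - T^[k+1] x) - (T^[k] y - T^[k+1] y) with hD
  have hak : a k = ‖T^[k] x - T^[k] y‖ := rfl
  have hak1 : a (k+1) = ‖T^[k+1] x - T^[k+1] y‖ := rfl
  have hDlt : ‖D‖ < ε/2 := by
    have hD2 : ‖D‖^2 < (ε/2)^2 := by
      rw [hak, hak1] at hk
      have : ‖D‖^2 = ‖(T^[k] x - T^[k+1] x) - (T^[k] y - T^[k+1] y)‖^2 := by rw [hD]
      have hcomp' : (l.length : ℝ) * ‖T^[k+1] x - T^[k+1] y‖^2 + ‖D‖^2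
          ≤ (l.length : ℝ) * ‖T^[k] x - T^[k] y‖^2 := by
        rw [this]
        have heq : (T^[k] x - T^[k+1] x) - (T^[k] y - T^[k+1] y)
            = (T^[k] x - listComp l (T^[k] x)) - (T^[k] y - listComp l (T^[k] y)) := by
          rw [e1, e2]
        rw [heq]
        calc (l.length : ℝ) * ‖T^[k+1] x - T^[k+1] y‖^2
              + ‖(T^[k] x - listComp l (T^[k] x)) - (T^[k] y - listComp l (T^[k] y))‖^2
            = (l.length : ℝ) * ‖listComp l (T^[k] x) - listComp l (T^[k] y)‖^2
              + ‖(T^[k] x - listComp l (T^[k] x)) - (T^[k] y - listComp l (T^[k] y))‖^2 := by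
              rw [e1, e2]
          _ ≤ (l.length : ℝ) * ‖T^[k] x - T^[k] y‖^2 := listComp_firm l hfirm _ _
      linarith
    nlinarith [norm_nonneg D, hε]
  have hyd : ∀ j : ℕ, ‖T^[j] y - T^[j+1] y‖ ≤ ‖y - T y‖ := by
    intro j
    induction j with
    | zero => simp
    | succ j ih =>
      have h1 : T^[j+1+1] y = T (T^[j+1] y) := hiter y (j+1)
      have h2 : T^[j+1] y = T (T^[j] y) := hiter y j
      calc ‖T^[j+1] y - T^[j+1+1] y‖ = ‖T (T^[j] y) - T (T^[j+1] y)‖ := by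
            rw [h1]; nth_rewrite 1 [h2]; rfl
        _ ≤ ‖T^[j] y - T^[j+1] y‖ := hTnon _ _
        _ ≤ ‖y - T y‖ := ih
  have hsplit : T^[k] x - T^[k+1] x = (T^[k] y - T^[k+1] y) + D := by rw [hD]; abel
  calc ‖T^[k] x - T^[k+1] x‖ ≤ ‖T^[k] y - T^[k+1] y‖ + ‖D‖ := by
        rw [hsplit]; exact norm_add_le _ _
    _ < ε/2 + ε/2 := by
        have := hyd k
        have := hyT
        linarith
    _ = ε := by ring
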